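/- Let 0 < β < 1 be real and let φ_β(t) = ∫_{1}^{∞} β y^{-1-β} e^{-t y} dy be the Laplace transform of the Pareto(β) density. Then lim_{t → 0⁺} (1 - φ_β(t)) / t^{β} = Γ(1-β), where Γ is the real Gamma function. -/

import Mathlib

open MeasureTheory Set Filter Topology

namespace ParetoAux

/-- integrand after substitution -/
noncomputable def f (β u : ℝ) : ℝ := β * u ^ (-1 - β) * (1 - Real.exp (-u))

lemma one_sub_exp_neg_le {u : ℝ} (hu : 0 ≤ u) : 1 - Real.exp (-u) ≤ u := by
  have := Real.add_one_le_exp (-u)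
  linarith

lemma one_sub_exp_neg_nonneg {u : ℝ} (hu : 0 ≤ u) : 0 ≤ 1 - Real.exp (-u) := by
  have : Real.exp (-u) ≤ Real.exp 0 := Real.exp_le_exp.2 (by linarith)
  simp only [Real.exp_zero] at this
  linarith

lemma contOn_f (β : ℝ) : ContinuousOn (f β) (Ioi (0:ℝ)) := by
  apply ContinuousOn.mul
  · exact continuousOn_const.mul (fun x hx =>
      (Real.continuousAt_rpow_const x _ (Or.inl (ne_of_gt hx))).continuousWithinAt)
  · exact (continuousOn_const.sub (Real.continuous_exp.comp continuous_neg).continuousOn)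

lemma integrableOn_f_Ioc {β : ℝ} (h0 : 0 < β) (h1 : β < 1) :
    IntegrableOn (f β) (Ioc (0:ℝ) 1) := by
  have hmeas : AEStronglyMeasurable (f β) (volume.restrict (Ioc (0:ℝ) 1)) :=
    ((contOn_f β).mono Ioc_subset_Ioi_self).aestronglyMeasurable measurableSet_Ioc
  have hint : IntegrableOn (fun u : ℝ => β * u ^ (-β)) (Ioc (0:ℝ) 1) := by
    have := (intervalIntegral.intervalIntegrable_rpow' (a := 0) (b := 1)
      (r := -β) (by linarith)).const_mul β
    rwa [intervalIntegrable_iff_integrableOn_Ioc_of_le zero_le_one] at this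
  refine hint.mono' hmeas ?_
  filter_upwards [ae_restrict_mem measurableSet_Ioc] with u hu
  have hu0 : 0 < u := hu.1
  have h2 : 0 ≤ 1 - Real.exp (-u) := one_sub_exp_neg_nonneg hu0.le
  have h3 : 0 ≤ u ^ (-1 - β) := Real.rpow_nonneg hu0.le _
  simp only [f]
  rw [Real.norm_of_nonneg (mul_nonneg (mul_nonneg h0.le h3) h2)]
  calc β * u ^ (-1 - β) * (1 - Real.exp (-u)) ≤ β * u ^ (-1 - β) * u :=
    mul_le_mul_of_nonneg_left (one_sub_exp_neg_le hu0.le) (mul_nonneg h0.le h3)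
    _ = β * u ^ (-β) := by
        rw [mul_assoc, ← Real.rpow_add_one hu0.ne' (-1 - β)]
        ring_nf

lemma integrableOn_aux {β c : ℝ} (h0 : 0 < β) (hc : 0 < c) :
    IntegrableOn (fun u : ℝ => β * u ^ (-1 - β)) (Ioi c) :=
  (integrableOn_Ioi_rpow_of_lt (by linarith) hc).const_mul β

lemma integrableOn_f_Ioi {β c : ℝ} (h0 : 0 < β) (hc : 0 < c) :
    IntegrableOn (f β) (Ioi c) := by
  have hmeas : AEStronglyMeasurable (f β) (volume.restrict (Ioi c)) :=
    ((contOn_f β).mono (Ioi_subset_Ioi hc.le)).aestronglyMeasurable measurableSet_Ioi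
  refine (integrableOn_aux h0 hc).mono' hmeas ?_
  filter_upwards [ae_restrict_mem measurableSet_Ioi] with u hu
  have hu0 : 0 < u := hc.trans hu
  have h2 : 0 ≤ 1 - Real.exp (-u) := one_sub_exp_neg_nonneg hu0.le
  have h3 : 0 ≤ u ^ (-1 - β) := Real.rpow_nonneg hu0.le _
  simp only [f]
  rw [Real.norm_of_nonneg (mul_nonneg (mul_nonneg h0.le h3) h2)]
  have h4 : 1 - Real.exp (-u) ≤ 1 := by have := Real.exp_pos (-u); linarith
  calc β * u ^ (-1 - β) * (1 - Real.exp (-u)) ≤ β * u ^ (-1 - β) * 1 :=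
        mul_le_mul_of_nonneg_left h4 (mul_nonneg h0.le h3)
    _ = β * u ^ (-1 - β) := mul_one _

lemma integrableOn_f {β : ℝ} (h0 : 0 < β) (h1 : β < 1) :
    IntegrableOn (f β) (Ioi (0:ℝ)) := by
  rw [← Ioc_union_Ioi_eq_Ioi (zero_le_one : (0:ℝ) ≤ 1)]
  exact (integrableOn_f_Ioc h0 h1).union (integrableOn_f_Ioi h0 one_pos)

/-- The Gamma integrand for `s = 1 - β`. -/
noncomputable def G (β u : ℝ) : ℝ := Real.exp (-u) * u ^ (1 - β - 1)

lemma integrableOn_G {β : ℝ} (h1 : β < 1) : IntegrableOn (G β) (Ioi (0:ℝ)) :=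
  Real.GammaIntegral_convergent (by linarith)

/-- Integration by parts: `∫_0^∞ β u^{-1-β}(1-e^{-u}) du = ∫_0^∞ e^{-u} u^{-β} du = Γ(1-β)`. -/
lemma integral_f {β : ℝ} (h0 : 0 < β) (h1 : β < 1) :
    ∫ u in Ioi (0:ℝ), f β u = Real.Gamma (1 - β) := by
  set F : ℝ → ℝ := fun u => -(u ^ (-β) * (1 - Real.exp (-u))) with hF
  have hderiv : ∀ x ∈ Ioi (0:ℝ), HasDerivAt F (f β x - G β x) x := by
    intro x hx
    have hx0 : (0:ℝ) < x := hx
    have h1' : HasDerivAt (fun u : ℝ => u ^ (-β)) (-β * x ^ (-β - 1)) x :=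
      Real.hasDerivAt_rpow_const (Or.inl hx0.ne')
    have h2' : HasDerivAt (fun u : ℝ => 1 - Real.exp (-u)) (Real.exp (-x)) x := by
      have := ((Real.hasDerivAt_exp (-x)).comp x (hasDerivAt_neg x)).const_sub 1
      simpa using this
    have := (h1'.mul h2').neg
    refine this.congr_deriv ?_
    simp only [f, G]
    rw [show (-1 : ℝ) - β = -β - 1 by ring, show (1:ℝ) - β - 1 = -β by ring,
      show x ^ (-β) = x ^ (-β - 1) * x by
        rw [← Real.rpow_add_one hx0.ne']; ring_nf]
    ring
  have hcont : ContinuousWithinAt F (Ici (0:ℝ)) 0 := by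
    have hF0 : F 0 = 0 := by
      simp [hF, Real.zero_rpow (by intro h; exact absurd (neg_eq_zero.mp h) h0.ne')]
    rw [ContinuousWithinAt, hF0]
    have hb : Tendsto (fun u : ℝ => u ^ (1 - β)) (nhdsWithin 0 (Ici (0:ℝ))) (𝓝 0) := by
      have : ContinuousAt (fun u : ℝ => u ^ (1 - β)) 0 :=
        Real.continuousAt_rpow_const 0 _ (Or.inr (by linarith))
      have h0' : (0:ℝ) ^ (1 - β) = 0 := Real.zero_rpow (by linarith)
      have h2 : Tendsto (fun u : ℝ => u ^ (1 - β)) (nhdsWithin 0 (Ici (0:ℝ)))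
          (𝓝 ((0:ℝ) ^ (1 - β))) := this.continuousWithinAt
      rwa [h0'] at h2
    refine squeeze_zero_norm' ?_ hb
    filter_upwards [self_mem_nhdsWithin] with u hu
    rcases eq_or_lt_of_le (Set.mem_Ici.mp hu) with h | h
    · simp [hF, ← h, Real.zero_rpow (by intro hh; exact absurd (neg_eq_zero.mp hh) h0.ne'),
        Real.zero_rpow (show (1:ℝ) - β ≠ 0 by linarith)]
    · have h2 : 0 ≤ 1 - Real.exp (-u) := one_sub_exp_neg_nonneg h.le
      have h3 : 0 ≤ u ^ (-β) := Real.rpow_nonneg h.le _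
      rw [hF, norm_neg, Real.norm_of_nonneg (mul_nonneg h3 h2)]
      calc u ^ (-β) * (1 - Real.exp (-u)) ≤ u ^ (-β) * u :=
            mul_le_mul_of_nonneg_left (one_sub_exp_neg_le h.le) h3
        _ = u ^ (1 - β) := by rw [← Real.rpow_add_one h.ne']; ring_nf
  have htop : Tendsto F atTop (𝓝 0) := by
    have hrp : Tendsto (fun u : ℝ => u ^ (-β)) atTop (𝓝 0) := tendsto_rpow_neg_atTop h0
    have hex : Tendsto (fun u : ℝ => 1 - Real.exp (-u)) atTop (𝓝 1) := by
      simpa using (Real.tendsto_exp_neg_atTop_nhds_zero.const_sub 1)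
    have := (hrp.mul hex).neg
    simpa using this
  have hint : IntegrableOn (fun x => f β x - G β x) (Ioi (0:ℝ)) :=
    (integrableOn_f h0 h1).sub (integrableOn_G h1)
  have key := integral_Ioi_of_hasDerivAt_of_tendsto hcont hderiv hint htop
  have hF0 : F 0 = 0 := by
    simp [hF, Real.zero_rpow (by intro h; exact absurd (neg_eq_zero.mp h) h0.ne')]
  rw [hF0, sub_zero] at key
  have hsplit : ∫ x in Ioi (0:ℝ), (f β x - G β x)
      = (∫ x in Ioi (0:ℝ), f β x) - ∫ x in Ioi (0:ℝ), G β x :=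
    integral_sub (integrableOn_f h0 h1) (integrableOn_G h1)
  rw [hsplit] at key
  rw [Real.Gamma_eq_integral (by linarith : (0:ℝ) < 1 - β)]
  have : ∫ x in Ioi (0:ℝ), G β x = ∫ x in Ioi (0:ℝ), Real.exp (-x) * x ^ (1 - β - 1) := rfl
  linarith [key, this]

/-- Integrability of the Laplace-transform integrand. -/
lemma integrableOn_phi {β t : ℝ} (h0 : 0 < β) (ht : 0 ≤ t) :
    IntegrableOn (fun y : ℝ => β * y ^ (-1 - β) * Real.exp (-(t * y))) (Ioi (1:ℝ)) := by
  have hmeas : AEStronglyMeasurable (fun y : ℝ => β * y ^ (-1 - β) * Real.exp (-(t * y)))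
      (volume.restrict (Ioi (1:ℝ))) := by
    apply ContinuousOn.aestronglyMeasurable _ measurableSet_Ioi
    apply ContinuousOn.mul
    · exact continuousOn_const.mul (fun x hx =>
        (Real.continuousAt_rpow_const x _ (Or.inl (lt_trans one_pos hx).ne')).continuousWithinAt)
    · exact (Real.continuous_exp.comp ((continuous_const.mul continuous_id).neg)).continuousOn
  refine (integrableOn_aux h0 one_pos).mono' hmeas ?_
  filter_upwards [ae_restrict_mem measurableSet_Ioi] with y hy
  have hy0 : (0:ℝ) < y := lt_trans one_pos hy
  have h3 : 0 ≤ y ^ (-1 - β) := Real.rpow_nonneg hy0.le _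
  have h4 : Real.exp (-(t * y)) ≤ 1 := Real.exp_le_one_iff.2 (by nlinarith)
  have h5 : 0 ≤ Real.exp (-(t * y)) := (Real.exp_pos _).le
  rw [Real.norm_of_nonneg (mul_nonneg (mul_nonneg h0.le h3) h5)]
  calc β * y ^ (-1 - β) * Real.exp (-(t * y)) ≤ β * y ^ (-1 - β) * 1 :=
        mul_le_mul_of_nonneg_left h4 (mul_nonneg h0.le h3)
    _ = β * y ^ (-1 - β) := mul_one _

lemma integral_pareto {β : ℝ} (h0 : 0 < β) :
    ∫ y in Ioi (1:ℝ), β * y ^ (-1 - β) = 1 := by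
  rw [MeasureTheory.integral_const_mul, integral_Ioi_rpow_of_lt (by linarith) one_pos]
  rw [Real.one_rpow, show (-1:ℝ) - β + 1 = -β by ring]
  field_simp

/-- Change of variables: for `t > 0`,
`(1 - φ_β(t)) / t^β = ∫_{t}^∞ β u^{-1-β} (1 - e^{-u}) du`. -/
lemma key_eq {β t : ℝ} (h0 : 0 < β) (ht : 0 < t) :
    (1 - ∫ y in Ioi (1:ℝ), β * y ^ (-1 - β) * Real.exp (-(t * y))) / t ^ β
      = ∫ u in Ioi t, f β u := by
  have hsub : (1 - ∫ y in Ioi (1:ℝ), β * y ^ (-1 - β) * Real.exp (-(t * y)))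
      = ∫ y in Ioi (1:ℝ), β * y ^ (-1 - β) * (1 - Real.exp (-(t * y))) := by
    have h2 := integral_sub (integrableOn_aux h0 one_pos (β := β)) (integrableOn_phi h0 ht.le)
    rw [integral_pareto h0] at h2
    rw [← h2]
    congr 1; ext y; ring
  have hcv : ∀ y ∈ Ioi (1:ℝ), β * y ^ (-1 - β) * (1 - Real.exp (-(t * y)))
      = t ^ (1 + β) * f β (y * t) := by
    intro y hy
    have hy0 : (0:ℝ) < y := lt_trans one_pos hy
    simp only [f]
    rw [Real.mul_rpow hy0.le ht.le]
    rw [show t ^ (-1 - β) = (t ^ (1 + β))⁻¹ by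
      rw [← Real.rpow_neg ht.le]; ring_nf]
    have htp : (0:ℝ) < t ^ (1 + β) := Real.rpow_pos_of_pos ht _
    rw [mul_comm t y]
    field_simp
  rw [hsub, setIntegral_congr_fun measurableSet_Ioi hcv, MeasureTheory.integral_const_mul,
    MeasureTheory.integral_comp_mul_right_Ioi (f β) 1 ht, one_mul, smul_eq_mul]
  rw [show t ^ (1 + β) * (t⁻¹ * ∫ u in Ioi t, f β u) = (t ^ (1 + β) * t⁻¹) * ∫ u in Ioi t, f β u
    by ring]
  rw [show t ^ (1 + β) * t⁻¹ = t ^ β by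
    rw [← Real.rpow_neg_one t, ← Real.rpow_add ht]; ring_nf]
  rw [mul_div_assoc, mul_comm]
  have : t ^ β ≠ 0 := (Real.rpow_pos_of_pos ht _).ne'
  field_simp

/-- The tail integral tends to the full integral. -/
lemma tendsto_tail {β : ℝ} (h0 : 0 < β) (h1 : β < 1) :
    Tendsto (fun t : ℝ => ∫ u in Ioi t, f β u) (nhdsWithin 0 (Ioi 0))
      (𝓝 (∫ u in Ioi (0:ℝ), f β u)) := by
  have herr : Tendsto (fun t : ℝ => ∫ u in Ioc (0:ℝ) t, f β u) (nhdsWithin 0 (Ioi 0))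
      (𝓝 0) := by
    have hb : Tendsto (fun t : ℝ => β * (t ^ (1 - β) / (1 - β))) (nhdsWithin 0 (Ioi 0))
        (𝓝 0) := by
      have : ContinuousAt (fun t : ℝ => β * (t ^ (1 - β) / (1 - β))) 0 := by
        apply ContinuousAt.mul continuousAt_const
        apply ContinuousAt.div_const
        exact Real.continuousAt_rpow_const 0 _ (Or.inr (by linarith))
      have h0' : (0:ℝ) ^ (1 - β) = 0 := Real.zero_rpow (by linarith)
      have := this.continuousWithinAt (s := Ioi 0)
      rw [ContinuousWithinAt] at this
      simpa [h0'] using this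
    refine squeeze_zero_norm' ?_ hb
    filter_upwards [self_mem_nhdsWithin] with t (ht : 0 < t)
    have hfab : IntegrableOn (f β) (Ioc (0:ℝ) t) :=
      (integrableOn_f h0 h1).mono_set Ioc_subset_Ioi_self
    have hgint : IntegrableOn (fun u : ℝ => β * u ^ (-β)) (Ioc (0:ℝ) t) := by
      have := (intervalIntegral.intervalIntegrable_rpow' (a := 0) (b := t)
        (r := -β) (by linarith)).const_mul β
      rwa [intervalIntegrable_iff_integrableOn_Ioc_of_le ht.le] at this
    have hbound : ∀ u ∈ Ioc (0:ℝ) t, ‖f β u‖ ≤ β * u ^ (-β) := by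
      intro u hu
      have hu0 : 0 < u := hu.1
      have h2 : 0 ≤ 1 - Real.exp (-u) := one_sub_exp_neg_nonneg hu0.le
      have h3 : 0 ≤ u ^ (-1 - β) := Real.rpow_nonneg hu0.le _
      simp only [f]
      rw [Real.norm_of_nonneg (mul_nonneg (mul_nonneg h0.le h3) h2)]
      calc β * u ^ (-1 - β) * (1 - Real.exp (-u)) ≤ β * u ^ (-1 - β) * u :=
            mul_le_mul_of_nonneg_left (one_sub_exp_neg_le hu0.le) (mul_nonneg h0.le h3)
        _ = β * u ^ (-β) := by
            rw [mul_assoc, ← Real.rpow_add_one hu0.ne' (-1 - β)]; ring_nf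
    calc ‖∫ u in Ioc (0:ℝ) t, f β u‖ ≤ ∫ u in Ioc (0:ℝ) t, ‖f β u‖ :=
          norm_integral_le_integral_norm _
      _ ≤ ∫ u in Ioc (0:ℝ) t, β * u ^ (-β) := by
          apply setIntegral_mono_on hfab.norm hgint measurableSet_Ioc hbound
      _ = β * (t ^ (1 - β) / (1 - β)) := by
          rw [MeasureTheory.integral_const_mul]
          congr 1
          rw [← intervalIntegral.integral_of_le ht.le,
            integral_rpow (Or.inl (by linarith : (-1:ℝ) < -β))]
          rw [Real.zero_rpow (by linarith : -β + 1 ≠ 0)]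
          rw [show -β + 1 = 1 - β by ring]
          simp
  have hsplit : ∀ᶠ t in nhdsWithin (0:ℝ) (Ioi 0),
      (∫ u in Ioi t, f β u) = (∫ u in Ioi (0:ℝ), f β u) - ∫ u in Ioc (0:ℝ) t, f β u := by
    filter_upwards [self_mem_nhdsWithin] with t (ht : 0 < t)
    have hun : Ioc (0:ℝ) t ∪ Ioi t = Ioi 0 := Ioc_union_Ioi_eq_Ioi ht.le
    have := setIntegral_union (Ioc_disjoint_Ioi le_rfl) measurableSet_Ioi
      ((integrableOn_f h0 h1).mono_set Ioc_subset_Ioi_self)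
      ((integrableOn_f h0 h1).mono_set (Ioi_subset_Ioi ht.le))
    rw [hun] at this
    rw [this]; ring
  have := (tendsto_const_nhds (x := ∫ u in Ioi (0:ℝ), f β u)
    (f := nhdsWithin (0:ℝ) (Ioi 0))).sub herr
  rw [sub_zero] at this
  exact Filter.Tendsto.congr' (Filter.EventuallyEq.symm hsplit) this

end ParetoAux

open MeasureTheory

/-- For real `0 < β < 1` and `φ_β(t) = ∫_1^∞ β y^{-1-β} e^{-ty} dy`,
`(1 - φ_β(t)) / t^β → Γ(1-β)` as `t → 0⁺`. -/
theorem stmt2 (β : ℝ) (h0 : 0 < β) (h1 : β < 1) :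
    Filter.Tendsto
      (fun t : ℝ =>
        (1 - ∫ y in Set.Ioi (1 : ℝ), β * y ^ (-1 - β) * Real.exp (-(t * y))) / t ^ β)
      (nhdsWithin 0 (Set.Ioi 0)) (nhds (Real.Gamma (1 - β))) := by
  have h := ParetoAux.tendsto_tail h0 h1
  rw [ParetoAux.integral_f h0 h1] at h
  refine Filter.Tendsto.congr' ?_ h
  filter_upwards [self_mem_nhdsWithin] with t (ht : 0 < t)
  exact (ParetoAux.key_eq h0 ht).symm
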